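/- Let A be an associative unital F-algebra containing a U_q(su(2)) triple K, K⁻¹, J₊, J₋, and let t^op₁, t^op₀, t^op₋₁ be the components of the operator t^op. Then t^op transforms as a vector under the coadjoint action of U_q(su(2)): (i) K⁻¹ t^op_A K = s^{−A} t^op_A for A = −1, 0, 1; (ii) −s J₊ t^op₋₁ K + K t^op₋₁ J₊ = c·t^op₀, −s J₊ t^op₀ K + K t^op₀ J₊ = c·t^op₁, and −s J₊ t^op₁ K + K t^op₁ J₊ = 0; (iii) −s⁻¹ J₋ t^op₁ K + K t^op₁ J₋ = c·t^op₀, −s⁻¹ J₋ t^op₀ K + K t^op₀ J₋ = c·t^op₋₁, and −s⁻¹ J₋ t^op₋₁ K + K t^op₋₁ J₋ = 0. -/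

import Mathlib

/-!
STATEMENT 4: the triple t^op = (t^op₋₁, t^op₀, t^op₁) built from a U_q(su(2)) triple
transforms as a vector under the coadjoint action of U_q(su(2)).
-/

variable {F : Type} [Field F] {A : Type} [Ring A] [Algebra F A]

set_option maxHeartbeats 1000000 in
theorem top_is_coadjoint_vector (s c : F) (hs : s ≠ 0) (hs' : s - s⁻¹ ≠ 0)
    (hc : c ≠ 0) (hc2 : c ^ 2 = s + s⁻¹)
    (K Ki Jp Jm : A)
    (hKKi : K * Ki = 1) (hKiK : Ki * K = 1)
    (hp : K * Jp * Ki = s • Jp) (hm : K * Jm * Ki = s⁻¹ • Jm)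
    (hcomm : Jp * Jm - Jm * Jp = (s - s⁻¹)⁻¹ • (K ^ 2 - Ki ^ 2))
    (top1 top0 topm1 : A)
    (htop1 : top1 = Jp * Ki)
    (htop0 : top0 = c⁻¹ • (s • (Jp * Jm) - s⁻¹ • (Jm * Jp)))
    (htopm1 : topm1 = -(Jm * Ki)) :
    -- (i) coadjoint action of K
    (Ki * top1 * K = s⁻¹ • top1 ∧ Ki * top0 * K = top0 ∧ Ki * topm1 * K = s • topm1) ∧
    -- (ii) coadjoint action of J₊
    (-(s • (Jp * topm1 * K)) + K * topm1 * Jp = c • top0 ∧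
     -(s • (Jp * top0 * K)) + K * top0 * Jp = c • top1 ∧
     -(s • (Jp * top1 * K)) + K * top1 * Jp = 0) ∧
    -- (iii) coadjoint action of J₋
    (-(s⁻¹ • (Jm * top1 * K)) + K * top1 * Jm = c • top0 ∧
     -(s⁻¹ • (Jm * top0 * K)) + K * top0 * Jm = c • topm1 ∧
     -(s⁻¹ • (Jm * topm1 * K)) + K * topm1 * Jm = 0) := by
  have cKiK : ∀ X : A, Ki * (K * X) = X := fun X => by rw [← mul_assoc, hKiK, one_mul]
  have cKKi : ∀ X : A, K * (Ki * X) = X := fun X => by rw [← mul_assoc, hKKi, one_mul]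
  have mKJp : K * Jp = s • (Jp * K) := by
    have h := congrArg (· * K) hp
    simpa [mul_assoc, hKiK, smul_mul_assoc] using h
  have mKJm : K * Jm = s⁻¹ • (Jm * K) := by
    have h := congrArg (· * K) hm
    simpa [mul_assoc, hKiK, smul_mul_assoc] using h
  have mKiJp : Ki * Jp = s⁻¹ • (Jp * Ki) := by
    have h := congrArg (fun x => Ki * x * Ki) mKJp
    simp only [mul_assoc, cKiK, hKKi, mul_one, mul_smul_comm, smul_mul_assoc] at h
    rw [h, smul_smul, inv_mul_cancel₀ hs, one_smul]
  have mKiJm : Ki * Jm = s • (Jm * Ki) := by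
    have h := congrArg (fun x => Ki * x * Ki) mKJm
    simp only [mul_assoc, cKiK, hKKi, mul_one, mul_smul_comm, smul_mul_assoc] at h
    rw [h, smul_smul, mul_inv_cancel₀ hs, one_smul]
  have hmp : Jm * Jp = Jp * Jm - (s - s⁻¹)⁻¹ • (K * K) + (s - s⁻¹)⁻¹ • (Ki * Ki) := by
    have h : Jm * Jp = Jp * Jm - (s - s⁻¹)⁻¹ • (K ^ 2 - Ki ^ 2) := by rw [← hcomm]; abel
    rw [h, pow_two, pow_two, smul_sub]; abel
  have pKJp : ∀ X : A, K * (Jp * X) = s • (Jp * (K * X)) := fun X => by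
    rw [← mul_assoc, mKJp, smul_mul_assoc, mul_assoc]
  have pKJm : ∀ X : A, K * (Jm * X) = s⁻¹ • (Jm * (K * X)) := fun X => by
    rw [← mul_assoc, mKJm, smul_mul_assoc, mul_assoc]
  have pKiJp : ∀ X : A, Ki * (Jp * X) = s⁻¹ • (Jp * (Ki * X)) := fun X => by
    rw [← mul_assoc, mKiJp, smul_mul_assoc, mul_assoc]
  have pKiJm : ∀ X : A, Ki * (Jm * X) = s • (Jm * (Ki * X)) := fun X => by
    rw [← mul_assoc, mKiJm, smul_mul_assoc, mul_assoc]
  have pmp : ∀ X : A, Jm * (Jp * X) =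
      Jp * (Jm * X) - (s - s⁻¹)⁻¹ • (K * (K * X)) + (s - s⁻¹)⁻¹ • (Ki * (Ki * X)) := fun X => by
    rw [← mul_assoc, hmp, add_mul, sub_mul, smul_mul_assoc, smul_mul_assoc,
      mul_assoc, mul_assoc, mul_assoc]
  have hA : (-1 + s ^ 2)⁻¹ = (s ^ 2 - 1)⁻¹ := by rw [neg_add_eq_sub]
  have hB : (s ^ 2 * c - c)⁻¹ = (s ^ 2 - 1)⁻¹ * c⁻¹ := by
    rw [show s ^ 2 * c - c = (s ^ 2 - 1) * c by ring, mul_inv]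
  have hC : (-(s * c) + s ^ 3 * c)⁻¹ = (s ^ 2 - 1)⁻¹ * c⁻¹ * s⁻¹ := by
    rw [show -(s * c) + s ^ 3 * c = (s ^ 2 - 1) * c * s by ring, mul_inv, mul_inv]
  have hD : (-(s ^ 2 * c) + s ^ 4 * c)⁻¹ = (s ^ 2 - 1)⁻¹ * c⁻¹ * s⁻¹ * s⁻¹ := by
    rw [show -(s ^ 2 * c) + s ^ 4 * c = (s ^ 2 - 1) * c * s * s by ring, mul_inv, mul_inv, mul_inv]
  have key : (s - s⁻¹) * s = s ^ 2 - 1 := by rw [sub_mul, inv_mul_cancel₀ hs, ← pow_two]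
  have h21 : s ^ 2 - 1 ≠ 0 := by rw [← key]; exact mul_ne_zero hs' hs
  have h21' : -1 + s ^ 2 ≠ 0 := by rw [neg_add_eq_sub]; exact h21
  have h2c : s ^ 2 * c - c ≠ 0 := by
    have h : s ^ 2 * c - c = (s ^ 2 - 1) * c := by ring
    rw [h]; exact mul_ne_zero h21 hc
  have h2c' : -(s * c) + s ^ 3 * c ≠ 0 := by
    have h : -(s * c) + s ^ 3 * c = s * c * (s ^ 2 - 1) := by ring
    rw [h]; exact mul_ne_zero (mul_ne_zero hs hc) h21
  have hc2' : c ^ 2 * s = s ^ 2 + 1 := by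
    rw [hc2, add_mul, inv_mul_cancel₀ hs]; ring
  subst htop1 htop0 htopm1
  refine ⟨⟨?_, ?_, ?_⟩, ⟨?_, ?_, ?_⟩, ⟨?_, ?_, ?_⟩⟩
  all_goals simp only [mul_assoc, mul_sub, sub_mul, mul_add, add_mul, neg_mul, mul_neg, smul_neg,
      neg_smul, mul_smul_comm, smul_mul_assoc, smul_sub, smul_add, smul_smul,
      pmp, pKJp, pKJm, pKiJp, pKiJm, cKiK, cKKi, hKKi, hKiK, mKJp, mKJm, mKiJp, mKiJm,
      hmp, mul_one, one_mul]
  all_goals try match_scalars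
  all_goals try field_simp
  all_goals try ring
  all_goals try simp only [hA, hB, hC, hD]
  all_goals try field_simp
  all_goals try ring
  all_goals try linear_combination (-(c * (s ^ 2 - 1) ^ 2)) * hc2'
  all_goals try linear_combination (c * (s ^ 2 - 1) ^ 2) * hc2'
  all_goals try linear_combination (-(s ^ 2 - 1)) * hc2'
  all_goals try linear_combination (s ^ 2 - 1) * hc2'
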